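/- Let θ be a compatible L-preorder on an algebra with L-order M. Then the factor structure M/θ, with universe {[a]_θ : a ∈ M} where [a]_θ = {b : θ(a,b) = θ(b,a) = 1}, operations f([a₁],…,[aₙ]) = [f(a₁,…,aₙ)], and relation [a] ≼ [b] = θ(a,b), is a well-defined algebra with L-order (in particular the operations and the relation are independent of the choice of representatives, and the three axioms of algebras with L-order hold). -/
import Mathlib


/-- A complete (integral commutative) residuated lattice. -/
class CRL (L : Type*) extends CompleteLattice L, CommMonoid L where
  himp : L → L → L
  adj : ∀ a b c : L, a * b ≤ c ↔ a ≤ himp b c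
  one_top : (1 : L) = ⊤

/-- A type (signature) of algebras: function symbols with finite arities. -/
structure Signature where
  F : Type
  ar : F → ℕ

/-- An algebra with L-order on carrier `M`: a fuzzy order `ord` and operations
interpreting each function symbol, satisfying reflexivity/antisymmetry,
transitivity, and compatibility. -/
structure LoAlgOn (L : Type*) [CRL L] (S : Signature) (M : Type*) where
  ord : M → M → L
  ops : ∀ f : S.F, (Fin (S.ar f) → M) → M
  refl_antisymm : ∀ a b : M, (ord a b = 1 ∧ ord b a = 1) ↔ a = b
  trans : ∀ a b c : M, ord a b * ord b c ≤ ord a c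
  compat : ∀ (f : S.F) (as bs : Fin (S.ar f) → M),
    (∏ i, ord (as i) (bs i)) ≤ ord (ops f as) (ops f bs)

/-- A compatible L-preorder on an algebra with L-order. -/
def IsCompatPreorder {L : Type*} [CRL L] {S : Signature} {M : Type*}
    (A : LoAlgOn L S M) (θ : M → M → L) : Prop :=
  (∀ a b : M, A.ord a b ≤ θ a b) ∧
  (∀ a b c : M, θ a b * θ b c ≤ θ a c) ∧
  (∀ (f : S.F) (as bs : Fin (S.ar f) → M),
    (∏ i, θ (as i) (bs i)) ≤ θ (A.ops f as) (A.ops f bs))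

/-- A homomorphism of algebras with L-order. -/
def IsHom {L : Type*} [CRL L] {S : Signature} {M N : Type*}
    (A : LoAlgOn L S M) (B : LoAlgOn L S N) (h : M → N) : Prop :=
  (∀ (f : S.F) (as : Fin (S.ar f) → M), h (A.ops f as) = B.ops f (fun i => h (as i))) ∧
  (∀ a b : M, A.ord a b ≤ B.ord (h a) (h b))

/-- The factor structure M/θ modulo a compatible L-preorder θ is a well-defined
algebra with L-order: the relation a ~ b iff θ(a,b) = θ(b,a) = 1 is an
equivalence, and the quotient carries an algebra with L-order whose operations
and fuzzy order are computed on representatives. -/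
theorem stmt_10 {L : Type*} [CRL L] {S : Signature} {M : Type*}
    (A : LoAlgOn L S M) (θ : M → M → L) (hθ : IsCompatPreorder A θ) :
    ∃ s : Setoid M, (∀ a b : M, s.r a b ↔ (θ a b = 1 ∧ θ b a = 1)) ∧
      ∃ B : LoAlgOn L S (Quotient s),
        (∀ (f : S.F) (as : Fin (S.ar f) → M),
          B.ops f (fun i => Quotient.mk s (as i)) = Quotient.mk s (A.ops f as)) ∧
        (∀ a b : M, B.ord (Quotient.mk s a) (Quotient.mk s b) = θ a b) := by
  obtain ⟨hord, htrans, hcompat⟩ := hθ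
  have h1 : ∀ x : L, x ≤ 1 := fun x => by rw [CRL.one_top]; exact le_top
  have heq1 : ∀ x : L, 1 ≤ x → x = 1 := fun x h => le_antisymm (h1 x) h
  have hrefl : ∀ a : M, θ a a = 1 := by
    intro a
    have h := hord a a
    rw [((A.refl_antisymm a a).mpr rfl).1] at h
    exact heq1 _ h
  -- lifting along θ-equalities
  have hleL : ∀ {a b c : M}, θ b a = 1 → θ a c ≤ θ b c := by
    intro a b c h
    have := htrans b a c
    rwa [h, one_mul] at this
  have hleR : ∀ {a b c : M}, θ b c = 1 → θ a b ≤ θ a c := by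
    intro a b c h
    have := htrans a b c
    rwa [h, mul_one] at this
  have rtrans : ∀ {a b c : M}, (θ a b = 1 ∧ θ b a = 1) → (θ b c = 1 ∧ θ c b = 1) →
      (θ a c = 1 ∧ θ c a = 1) := by
    rintro a b c ⟨h1', h2⟩ ⟨h3, h4⟩
    refine ⟨heq1 _ ?_, heq1 _ ?_⟩
    · have := htrans a b c; rwa [h1', h3, one_mul] at this
    · have := htrans c b a; rwa [h4, h2, one_mul] at this
  let s : Setoid M := ⟨fun a b => θ a b = 1 ∧ θ b a = 1,
    fun a => ⟨hrefl a, hrefl a⟩, fun h => ⟨h.2, h.1⟩, rtrans⟩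
  have hcong : ∀ (a b c d : M), s.r a c → s.r b d → θ a b = θ c d := by
    rintro a b c d ⟨hac, hca⟩ ⟨hbd, hdb⟩
    exact le_antisymm (le_trans (hleL hca) (hleR hbd))
      (le_trans (hleL hac) (hleR hdb))
  let bord : Quotient s → Quotient s → L := Quotient.lift₂ θ hcong
  let bops : ∀ f : S.F, (Fin (S.ar f) → Quotient s) → Quotient s :=
    fun f q => Quotient.mk s (A.ops f (fun i => (q i).out))
  have hbord : ∀ x y : Quotient s, bord x y = θ x.out y.out := by
    intro x y
    induction x using Quotient.ind
    induction y using Quotient.ind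
    exact hcong _ _ _ _ (Setoid.symm (Quotient.mk_out _)) (Setoid.symm (Quotient.mk_out _))
  have hops_rel : ∀ (f : S.F) (as bs : Fin (S.ar f) → M),
      (∀ i, s.r (as i) (bs i)) → θ (A.ops f as) (A.ops f bs) = 1 := by
    intro f as bs h
    refine heq1 _ ?_
    have := hcompat f as bs
    have hp : (∏ i, θ (as i) (bs i)) = 1 := by
      rw [Finset.prod_congr rfl (fun i _ => (h i).1), Finset.prod_const_one]
    rwa [hp] at this
  have hopsmk : ∀ (f : S.F) (as : Fin (S.ar f) → M),
      bops f (fun i => Quotient.mk s (as i)) = Quotient.mk s (A.ops f as) := by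
    intro f as
    refine Quotient.sound ?_
    have h : ∀ i, s.r ((Quotient.mk s (as i)).out) (as i) := fun i => Quotient.mk_out _
    exact ⟨hops_rel f _ _ h, hops_rel f _ _ (fun i => Setoid.symm (h i))⟩
  refine ⟨s, fun a b => Iff.rfl, ?_⟩
  refine ⟨⟨bord, bops, ?_, ?_, ?_⟩, hopsmk, fun a b => rfl⟩
  · intro x y
    induction x using Quotient.ind with | _ a =>
    induction y using Quotient.ind with | _ b =>
    constructor
    · rintro ⟨h1', h2⟩
      exact Quotient.sound ⟨h1', h2⟩
    · intro h
      exact ⟨(Quotient.exact h).1, (Quotient.exact h).2⟩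
  · intro x y z
    induction x using Quotient.ind with | _ a =>
    induction y using Quotient.ind with | _ b =>
    induction z using Quotient.ind with | _ c =>
    exact htrans a b c
  · intro f as bs
    have h := hcompat f (fun i => (as i).out) (fun i => (bs i).out)
    calc (∏ i, bord (as i) (bs i)) = ∏ i, θ ((as i).out) ((bs i).out) := by
          exact Finset.prod_congr rfl (fun i _ => hbord _ _)
      _ ≤ θ (A.ops f (fun i => (as i).out)) (A.ops f (fun i => (bs i).out)) := h
      _ = bord (bops f as) (bops f bs) := rfl
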